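/- Let ℓ and ℓ̃ be discretely conformally equivalent metrics on a simplicial surface with boundary, related by vertex scale factors u : V → ℝ. Then ℓ and ℓ̃ have equal length half cross ratios on every boundary edge if and only if u is locally constant on the boundary (i.e., constant on each connected component of the boundary). -/
import Mathlib


/-- two discretely conformally equivalent metrics (related by
vertex scale factors `u`) have equal length half cross ratios on every
boundary edge iff `u` is locally constant on the boundary, i.e. `du = 0`
on every boundary edge. Boundary edges are indexed by `Bd`, where the
boundary edge `b` goes from vertex `bi b` to `bj b`, its unique adjacent
face is `(bi b, bj b, bk b)`, and `ejk b`, `eki b` are the two remaining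
edges of that face. -/
theorem lhcr_eq_iff_locally_constant_boundary_scale
    {V E Bd : Type*} (ends : E → V × V)
    (bi bj bk : Bd → V) (ejk eki : Bd → E)
    (hjk : ∀ b, ends (ejk b) = (bj b, bk b))
    (hki : ∀ b, ends (eki b) = (bk b, bi b))
    (ℓ ℓt : E → ℝ) (hℓ : ∀ e, 0 < ℓ e) (hℓt : ∀ e, 0 < ℓt e)
    (u : V → ℝ)
    (hconf : ∀ e, ℓt e = Real.exp ((u (ends e).1 + u (ends e).2) / 2) * ℓ e) :
    (∀ b, ℓ (ejk b) / ℓ (eki b) = ℓt (ejk b) / ℓt (eki b))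
      ↔ ∀ b, u (bj b) - u (bi b) = 0 := by
  have key : ∀ b, (ℓ (ejk b) / ℓ (eki b) = ℓt (ejk b) / ℓt (eki b)) ↔ u (bj b) - u (bi b) = 0 := by
    intro b
    have h1 := hconf (ejk b)
    have h2 := hconf (eki b)
    rw [hjk b] at h1
    rw [hki b] at h2
    simp only [Prod.fst, Prod.snd] at h1 h2
    have hne : ℓ (ejk b) / ℓ (eki b) ≠ 0 :=
      ne_of_gt (div_pos (hℓ _) (hℓ _))
    have hr : ℓt (ejk b) / ℓt (eki b)
        = Real.exp ((u (bj b) - u (bi b)) / 2) * (ℓ (ejk b) / ℓ (eki b)) := by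
      rw [h1, h2]
      field_simp [Real.exp_ne_zero, (hℓ (eki b)).ne']
      have : Real.exp ((u (bj b) + u (bk b)) / 2)
          = Real.exp ((u (bj b) - u (bi b)) / 2) * Real.exp ((u (bk b) + u (bi b)) / 2) := by
        rw [← Real.exp_add]; ring_nf
      rw [this]; ring
    rw [hr]
    constructor
    · intro h
      have h1' : Real.exp ((u (bj b) - u (bi b)) / 2) * (ℓ (ejk b) / ℓ (eki b))
          = 1 * (ℓ (ejk b) / ℓ (eki b)) := by rw [← h]; ring
      have := mul_right_cancel₀ hne h1'
      rw [← Real.exp_zero] at this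
      have := Real.exp_injective this
      linarith
    · intro h
      rw [h]
      simp
  exact forall_congr' key
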